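/- For all a ∈ ℂ \ {-1,-2,-3,...}, ∏_{n≥1} [((2n+2a)(2n+a+1)) / ((2n+a)(2n+1))]^{(-1)^{t_n}} = 1/(a+1). -/

import Mathlib

open Filter Finset Topology

/-- The Thue–Morse sequence: sum modulo 2 of the binary digits of `n`. -/
def tm (n : ℕ) : ℕ := (Nat.digits 2 n).sum % 2
def eps (n : ℕ) : ℤ := (-1) ^ tm n
lemma tm_le (n : ℕ) : tm n = 0 ∨ tm n = 1 := Nat.mod_two_eq_zero_or_one _
lemma tm_two_mul (m : ℕ) : tm (2 * m) = tm m := by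
  rcases Nat.eq_zero_or_pos m with h | h
  · simp [h]
  · unfold tm
    rw [Nat.digits_def' (by norm_num) (by positivity)]
    simp [Nat.mul_div_cancel_left _ (by norm_num : 0 < 2)]
lemma tm_two_mul_add_one (m : ℕ) : tm (2 * m + 1) = (tm m + 1) % 2 := by
  unfold tm
  rw [Nat.digits_def' (by norm_num) (by positivity)]
  have h1 : (2 * m + 1) % 2 = 1 := by omega
  have h2 : (2 * m + 1) / 2 = m := by omega
  rw [h1, h2]
  simp [List.sum_cons, Nat.add_mod]
  omega
lemma eps_two_mul (m : ℕ) : eps (2 * m) = eps m := by unfold eps; rw [tm_two_mul]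
lemma eps_two_mul_add_one (m : ℕ) : eps (2 * m + 1) = -eps m := by
  unfold eps
  rw [tm_two_mul_add_one]
  rcases tm_le m with h | h <;> simp [h]
lemma eps_zero : eps 0 = 1 := by simp [eps, tm]
lemma eps_one : eps 1 = -1 := by
  have := eps_two_mul_add_one 0
  simp only [eps_zero] at this
  simpa using this

noncomputable def gg (a : ℂ) (k : ℕ) : ℂ :=
  ((2 * (k : ℂ) + a) * (2 * (k : ℂ) + 1)) / ((2 * (k : ℂ)) * (2 * (k : ℂ) + 1 + a))
noncomputable def ff (a : ℂ) (N : ℕ) : ℂ :=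
  ∏ n ∈ Finset.range N, (((n : ℂ) + 1 + a) / ((n : ℂ) + 1)) ^ eps (n + 1)
noncomputable def GG (a : ℂ) (N : ℕ) : ℂ :=
  ∏ m ∈ Finset.range N, gg a (m + 1) ^ eps (m + 1)

section
variable {a : ℂ} (ha : ∀ k : ℕ, a ≠ -((k : ℂ) + 1))

include ha in
lemma h_na (k : ℕ) : (k : ℂ) + 1 + a ≠ 0 := by
  intro h
  exact ha k (by linear_combination h)

include ha in
lemma h_odd_a (k : ℕ) : 2 * (k : ℂ) + 1 + a ≠ 0 := by
  intro h
  apply ha (2 * k)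
  push_cast
  linear_combination h

include ha in
lemma h_even_a (k : ℕ) : 2 * ((k : ℂ) + 1) + a ≠ 0 := by
  intro h
  apply ha (2 * k + 1)
  push_cast
  linear_combination h

lemma cast_k1 (k : ℕ) : ((k : ℂ) + 1) ≠ 0 := by
  have : ((k + 1 : ℕ) : ℂ) ≠ 0 := Nat.cast_ne_zero.2 k.succ_ne_zero
  push_cast at this; exact this

lemma h2k1 (k : ℕ) : 2 * ((k : ℂ) + 1) + 1 ≠ 0 := by
  have : ((2 * k + 3 : ℕ) : ℂ) ≠ 0 := Nat.cast_ne_zero.2 (by omega)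
  intro h; apply this; push_cast; linear_combination h

lemma h2k (k : ℕ) : 2 * ((k : ℂ) + 1) ≠ 0 :=
  mul_ne_zero two_ne_zero (cast_k1 k)

lemma gg_succ_eq (k : ℕ) : gg a (k + 1) =
    ((2 * ((k : ℂ) + 1) + a) * (2 * ((k : ℂ) + 1) + 1)) /
      ((2 * ((k : ℂ) + 1)) * (2 * ((k : ℂ) + 1) + 1 + a)) := by
  unfold gg; push_cast; ring_nf

include ha in
lemma gg_succ_ne (k : ℕ) : gg a (k + 1) ≠ 0 := by
  rw [gg_succ_eq]
  exact div_ne_zero (mul_ne_zero (h_even_a ha k) (h2k1 k))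
    (mul_ne_zero (h2k k) (by have := h_odd_a ha (k + 1); push_cast at this ⊢; intro h; exact this (by linear_combination h)))

include ha in
lemma key1 (n : ℕ) :
    (((2 * ((n : ℂ) + 1) + 2 * a) * (2 * ((n : ℂ) + 1) + a + 1)) /
      ((2 * ((n : ℂ) + 1) + a) * (2 * ((n : ℂ) + 1) + 1))) * gg a (n + 1)
      = ((n : ℂ) + 1 + a) / ((n : ℂ) + 1) := by
  rw [gg_succ_eq]
  have e1 := h_even_a ha n
  have e2 := h2k1 n
  have e3 := h2k n
  have e4 : 2 * ((n : ℂ) + 1) + 1 + a ≠ 0 := by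
    have := h_odd_a ha (n + 1); push_cast at this ⊢; intro h; exact this (by linear_combination h)
  have e5 := cast_k1 n
  field_simp
  ring
end

section
variable {a : ℂ} (ha : ∀ k : ℕ, a ≠ -((k : ℂ) + 1))

lemma zpow_mul_zpow_neg (x y : ℂ) (e : ℤ) : x ^ e * y ^ (-e) = (x / y) ^ e := by
  rw [div_eq_mul_inv, mul_zpow, inv_zpow, zpow_neg]

include ha in
lemma ff_odd_split (N : ℕ) : ff a (2 * N + 1) * (1 + a) = GG a N := by
  induction N with
  | zero =>
    rw [show 2 * 0 + 1 = 1 from rfl]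
    simp only [ff, GG, Finset.range_one, Finset.prod_singleton, Finset.range_zero,
      Finset.prod_empty]
    rw [eps_one]
    have h1a : (1 : ℂ) + a ≠ 0 := by
      have := h_na ha 0; intro h; exact this (by linear_combination h)
    simp only [Nat.cast_zero, zero_add, div_one]
    rw [zpow_neg, zpow_one]
    exact inv_mul_cancel₀ h1a
  | succ N ih =>
    have hidx : 2 * (N + 1) + 1 = (2 * N + 1) + 1 + 1 := by ring
    rw [hidx]
    unfold ff
    rw [Finset.prod_range_succ, Finset.prod_range_succ]
    have he1 : eps (2 * N + 1 + 1) = eps (N + 1) := by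
      have : 2 * N + 1 + 1 = 2 * (N + 1) := by ring
      rw [this, eps_two_mul]
    have he2 : eps (2 * N + 1 + 1 + 1) = -eps (N + 1) := by
      have : 2 * N + 1 + 1 + 1 = 2 * (N + 1) + 1 := by ring
      rw [this, eps_two_mul_add_one]
    rw [he1, he2]
    have hGG : GG a (N + 1) = GG a N * gg a (N + 1) ^ eps (N + 1) := Finset.prod_range_succ _ _
    rw [hGG, ← ih]
    have hbase :
        ((((2 * N + 1 : ℕ) : ℂ) + 1 + a) / (((2 * N + 1 : ℕ) : ℂ) + 1)) /
          ((((2 * N + 1 + 1 : ℕ) : ℂ) + 1 + a) / (((2 * N + 1 + 1 : ℕ) : ℂ) + 1))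
          = gg a (N + 1) := by
      rw [gg_succ_eq]
      have e1 : ((2 * N + 1 : ℕ) : ℂ) + 1 ≠ 0 := cast_k1 (2 * N + 1)
      have e2 : ((2 * N + 1 + 1 : ℕ) : ℂ) + 1 ≠ 0 := cast_k1 (2 * N + 1 + 1)
      have e3 : ((2 * N + 1 + 1 : ℕ) : ℂ) + 1 + a ≠ 0 := h_na ha (2 * N + 1 + 1)
      have e4 := h2k (N : ℕ)
      have e5 := h2k1 (N : ℕ)
      have e6 : 2 * ((N : ℂ) + 1) + 1 + a ≠ 0 := by
        have := h_odd_a ha (N + 1); push_cast at this ⊢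
        intro h; exact this (by linear_combination h)
      push_cast at e1 e2 e3 ⊢
      field_simp
      ring
    calc ff a (2 * N + 1) *
          ((((2 * N + 1 : ℕ) : ℂ) + 1 + a) / (((2 * N + 1 : ℕ) : ℂ) + 1)) ^ eps (N + 1) *
          ((((2 * N + 1 + 1 : ℕ) : ℂ) + 1 + a) / (((2 * N + 1 + 1 : ℕ) : ℂ) + 1)) ^ (-eps (N + 1))
          * (1 + a)
        = (ff a (2 * N + 1) * (1 + a)) *
            ((((2 * N + 1 : ℕ) : ℂ) + 1 + a) / (((2 * N + 1 : ℕ) : ℂ) + 1)) ^ eps (N + 1) *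
            ((((2 * N + 1 + 1 : ℕ) : ℂ) + 1 + a) / (((2 * N + 1 + 1 : ℕ) : ℂ) + 1)) ^ (-eps (N + 1)) := by
          ring
      _ = (ff a (2 * N + 1) * (1 + a)) * gg a (N + 1) ^ eps (N + 1) := by
          rw [mul_assoc, zpow_mul_zpow_neg, hbase]
      _ = ff a (2 * N + 1) * (1 + a) * gg a (N + 1) ^ eps (N + 1) := by ring

include ha in
lemma prod_mul_GG (N : ℕ) :
    (∏ n ∈ Finset.range N,
        (((2 * ((n : ℂ) + 1) + 2 * a) * (2 * ((n : ℂ) + 1) + a + 1)) /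
          ((2 * ((n : ℂ) + 1) + a) * (2 * ((n : ℂ) + 1) + 1)))
          ^ ((-1 : ℤ) ^ tm (n + 1))) * GG a N = ff a N := by
  unfold GG ff
  rw [← Finset.prod_mul_distrib]
  refine Finset.prod_congr rfl fun n _ => ?_
  have : ((-1 : ℤ) ^ tm (n + 1)) = eps (n + 1) := rfl
  rw [this, ← mul_zpow, key1 ha n]
end

lemma norm_add_ge (x b : ℂ) : ‖x‖ - ‖b‖ ≤ ‖x + b‖ := by
  have h := norm_add_le (x + b) (-b)
  simp only [add_neg_cancel_right, norm_neg] at h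
  linarith

section
variable {a : ℂ} (ha2k : ∀ k : ℕ, 1 ≤ k → 2 * (k : ℂ) + a ≠ 0)
  (hok : ∀ k : ℕ, 2 * (k : ℂ) + 1 + a ≠ 0)

-- bound in the case eps = 1
include hok in
lemma bound_pos (k : ℕ) (hk1 : 1 ≤ k) (hka : ‖a‖ ≤ (k : ℝ)) :
    ‖Complex.log (gg a k)‖ ≤ ‖a‖ * (1 / (k : ℝ) ^ 2) := by
  have hk0 : (0 : ℝ) < (k : ℝ) := by exact_mod_cast hk1
  have h2k : (2 : ℂ) * (k : ℂ) ≠ 0 := by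
    simp only [mul_ne_zero_iff]
    exact ⟨two_ne_zero, Nat.cast_ne_zero.2 (by omega)⟩
  have hoka := hok k
  have hgg : gg a k = 1 + a / ((2 * (k : ℂ)) * (2 * (k : ℂ) + 1 + a)) := by
    have hkc : (k : ℂ) ≠ 0 := Nat.cast_ne_zero.2 (by omega)
    unfold gg; field_simp; ring
  set d : ℂ := a / ((2 * (k : ℂ)) * (2 * (k : ℂ) + 1 + a)) with hd
  have hnorm2k : ‖(2 : ℂ) * (k : ℂ)‖ = 2 * (k : ℝ) := by
    rw [norm_mul]; simp
  have hlow : (k : ℝ) + 1 ≤ ‖2 * (k : ℂ) + 1 + a‖ := by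
    have h1 := norm_add_ge (2 * (k : ℂ) + 1) a
    have h2 : ‖2 * (k : ℂ) + 1‖ = 2 * (k : ℝ) + 1 := by
      have : (2 * (k : ℂ) + 1) = ((2 * k + 1 : ℕ) : ℂ) := by push_cast; ring
      rw [this, Complex.norm_natCast]; push_cast; ring
    rw [h2] at h1
    linarith
  have hdnorm : ‖d‖ ≤ ‖a‖ / (2 * (k : ℝ) * ((k : ℝ) + 1)) := by
    rw [hd, norm_div, norm_mul, hnorm2k]
    apply div_le_div_of_nonneg_left (norm_nonneg a) (by positivity)
    have : (0 : ℝ) < 2 * (k : ℝ) := by positivity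
    calc 2 * (k : ℝ) * ((k : ℝ) + 1) ≤ 2 * (k : ℝ) * ‖2 * (k : ℂ) + 1 + a‖ := by
          apply mul_le_mul_of_nonneg_left hlow (by positivity)
      _ = _ := rfl
  have hdhalf : ‖d‖ ≤ 1 / 2 := by
    have h1 : ‖a‖ / (2 * (k : ℝ) * ((k : ℝ) + 1)) ≤ 1 / 2 := by
      rw [div_le_div_iff₀ (by positivity) (by norm_num)]
      nlinarith
    linarith
  have hlog := Complex.norm_log_one_add_half_le_self hdhalf
  rw [hgg]
  calc ‖Complex.log (1 + d)‖ ≤ 3 / 2 * ‖d‖ := hlog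
    _ ≤ 3 / 2 * (‖a‖ / (2 * (k : ℝ) * ((k : ℝ) + 1))) := by linarith [hdnorm]
    _ ≤ ‖a‖ * (1 / (k : ℝ) ^ 2) := by
        have hk1' : (1:ℝ) ≤ (k:ℝ) := by exact_mod_cast hk1
        rw [mul_one_div, ← mul_div_assoc, div_le_div_iff₀ (by positivity) (by positivity)]
        nlinarith [norm_nonneg a, hk1', hk0]

-- bound in the case eps = -1
include ha2k in
lemma bound_neg (k : ℕ) (hk1 : 1 ≤ k) (hka : ‖a‖ ≤ (k : ℝ)) :
    ‖Complex.log ((gg a k)⁻¹)‖ ≤ ‖a‖ * (1 / (k : ℝ) ^ 2) := by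
  have hk0 : (0 : ℝ) < (k : ℝ) := by exact_mod_cast hk1
  have h2ka := ha2k k hk1
  have h2k1 : (2 : ℂ) * (k : ℂ) + 1 ≠ 0 := by
    have : (2 * (k : ℂ) + 1) = ((2 * k + 1 : ℕ) : ℂ) := by push_cast; ring
    rw [this]; exact Nat.cast_ne_zero.2 (by omega)
  have hgg : (gg a k)⁻¹ = 1 + (-a) / ((2 * (k : ℂ) + a) * (2 * (k : ℂ) + 1)) := by
    unfold gg
    rw [inv_div]
    field_simp
    ring
  set d : ℂ := (-a) / ((2 * (k : ℂ) + a) * (2 * (k : ℂ) + 1)) with hd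
  have hnorm2k1 : ‖2 * (k : ℂ) + 1‖ = 2 * (k : ℝ) + 1 := by
    have : (2 * (k : ℂ) + 1) = ((2 * k + 1 : ℕ) : ℂ) := by push_cast; ring
    rw [this, Complex.norm_natCast]; push_cast; ring
  have hlow : (k : ℝ) ≤ ‖2 * (k : ℂ) + a‖ := by
    have h1 := norm_add_ge (2 * (k : ℂ)) a
    have h2 : ‖(2 : ℂ) * (k : ℂ)‖ = 2 * (k : ℝ) := by rw [norm_mul]; simp
    rw [h2] at h1
    linarith
  have hdnorm : ‖d‖ ≤ ‖a‖ / ((k : ℝ) * (2 * (k : ℝ) + 1)) := by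
    rw [hd, norm_div, norm_mul, norm_neg, hnorm2k1]
    apply div_le_div_of_nonneg_left (norm_nonneg a) (by positivity)
    apply mul_le_mul_of_nonneg_right hlow (by positivity)
  have hdhalf : ‖d‖ ≤ 1 / 2 := by
    have h1 : ‖a‖ / ((k : ℝ) * (2 * (k : ℝ) + 1)) ≤ 1 / 2 := by
      have hk1' : (1:ℝ) ≤ (k:ℝ) := by exact_mod_cast hk1
      rw [div_le_div_iff₀ (by positivity) (by norm_num)]
      nlinarith [hk1', hk0, hka]
    linarith
  have hlog := Complex.norm_log_one_add_half_le_self hdhalf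
  rw [hgg]
  calc ‖Complex.log (1 + d)‖ ≤ 3 / 2 * ‖d‖ := hlog
    _ ≤ 3 / 2 * (‖a‖ / ((k : ℝ) * (2 * (k : ℝ) + 1))) := by linarith [hdnorm]
    _ ≤ ‖a‖ * (1 / (k : ℝ) ^ 2) := by
        have hk1' : (1:ℝ) ≤ (k:ℝ) := by exact_mod_cast hk1
        rw [mul_one_div, ← mul_div_assoc, div_le_div_iff₀ (by positivity) (by positivity)]
        nlinarith [norm_nonneg a, hk1', hk0]
end


lemma tendsto_of_even_odd {f : ℕ → ℂ} {l : ℂ}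
    (he : Tendsto (fun n => f (2 * n)) atTop (𝓝 l))
    (ho : Tendsto (fun n => f (2 * n + 1)) atTop (𝓝 l)) :
    Tendsto f atTop (𝓝 l) := by
  rw [Metric.tendsto_atTop] at he ho ⊢
  intro ε hε
  obtain ⟨N₁, h₁⟩ := he ε hε
  obtain ⟨N₂, h₂⟩ := ho ε hε
  refine ⟨2 * (max N₁ N₂) + 1, fun n hn => ?_⟩
  rcases Nat.even_or_odd n with ⟨k, hk⟩ | ⟨k, hk⟩
  · have hk' : n = 2 * k := by omega
    rw [hk']
    exact h₁ k (by omega)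
  · have hk' : n = 2 * k + 1 := by omega
    rw [hk']
    exact h₂ k (by omega)

section
variable {a : ℂ} (ha : ∀ k : ℕ, a ≠ -((k : ℂ) + 1))

lemma eps_eq_one_or (n : ℕ) : eps n = 1 ∨ eps n = -1 := by
  unfold eps
  rcases tm_le n with h | h <;> simp [h]

include ha in
lemma ha2k : ∀ k : ℕ, 1 ≤ k → 2 * (k : ℂ) + a ≠ 0 := by
  intro k hk
  obtain ⟨j, rfl⟩ : ∃ j, k = j + 1 := ⟨k - 1, by omega⟩
  have := h_even_a ha j
  push_cast at this ⊢
  exact this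

set_option maxHeartbeats 1000000 in
include ha in
lemma summable_log : Summable (fun m : ℕ => Complex.log (gg a (m + 1) ^ eps (m + 1))) := by
  have h1 : Summable (fun n : ℕ => 1 / (n : ℝ) ^ 2) := Real.summable_one_div_nat_pow.mpr one_lt_two
  have h2 : Summable (fun m : ℕ => 1 / (((m + 1 : ℕ)) : ℝ) ^ 2) :=
    (summable_nat_add_iff 1).mpr h1
  have h3 : Summable (fun m : ℕ => ‖a‖ * (1 / (((m + 1 : ℕ)) : ℝ) ^ 2)) := h2.mul_left _
  apply Summable.of_norm_bounded_eventually_nat h3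
  filter_upwards [eventually_ge_atTop ⌈‖a‖⌉₊] with m hm
  have hka : ‖a‖ ≤ ((m + 1 : ℕ) : ℝ) := by
    have h4 : ‖a‖ ≤ (⌈‖a‖⌉₊ : ℝ) := Nat.le_ceil _
    have h5 : ((⌈‖a‖⌉₊ : ℕ) : ℝ) ≤ ((m + 1 : ℕ) : ℝ) := by exact_mod_cast Nat.le_succ_of_le hm
    linarith
  rcases eps_eq_one_or (m + 1) with h | h
  · rw [h, zpow_one]
    exact bound_pos (h_odd_a ha) (m + 1) (by omega) hka
  · rw [h, zpow_neg_one]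
    exact bound_neg (ha2k ha) (m + 1) (by omega) hka

include ha in
lemma GG_tendsto : ∃ L : ℂ, L ≠ 0 ∧ Tendsto (GG a) atTop (𝓝 L) := by
  have hs := summable_log ha
  have hp := hs.hasSum.cexp
  have heq : (Complex.exp ∘ fun m : ℕ => Complex.log (gg a (m + 1) ^ eps (m + 1)))
      = fun m : ℕ => gg a (m + 1) ^ eps (m + 1) := by
    funext m
    exact Complex.exp_log (zpow_ne_zero _ (gg_succ_ne ha m))
  rw [heq] at hp
  refine ⟨Complex.exp (∑' m : ℕ, Complex.log (gg a (m + 1) ^ eps (m + 1))),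
    Complex.exp_ne_zero _, ?_⟩
  have := hp.tendsto_prod_nat
  unfold GG
  exact this

omit ha in
omit ha in
lemma tail_tendsto :
    Tendsto (fun N : ℕ => ((((2 * N : ℕ) : ℂ) + 1 + a) / (((2 * N : ℕ) : ℂ) + 1))
      ^ eps (2 * N + 1)) atTop (𝓝 1) := by
  set b : ℕ → ℂ := fun N => (((2 * N : ℕ) : ℂ) + 1 + a) / (((2 * N : ℕ) : ℂ) + 1) with hbdef
  have hb : Tendsto b atTop (𝓝 1) := by
    have hsub : ∀ N : ℕ, b N - 1 = a / (((2 * N : ℕ) : ℂ) + 1) := by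
      intro N
      have hne := cast_k1 (2 * N)
      rw [hbdef]
      push_cast at hne ⊢
      field_simp
      ring
    have hg : Tendsto (fun N : ℕ => ‖a‖ * (1 / ((N : ℝ) + 1))) atTop (𝓝 0) := by
      have h0 : Tendsto (fun N : ℕ => 1 / ((N : ℝ) + 1)) atTop (𝓝 0) := by
        have := (tendsto_one_div_atTop_nhds_zero_nat (𝕜 := ℝ)).comp (tendsto_add_atTop_nat 1)
        refine this.congr fun N => ?_
        simp only [Function.comp_apply]
        push_cast
        ring
      have := h0.const_mul ‖a‖
      simpa using this
    have hzero : Tendsto (fun N : ℕ => b N - 1) atTop (𝓝 0) := by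
      apply squeeze_zero_norm _ hg
      intro N
      rw [hsub N, norm_div]
      have h1 : ‖(((2 * N : ℕ) : ℂ) + 1)‖ = 2 * (N : ℝ) + 1 := by
        have : (((2 * N : ℕ) : ℂ) + 1) = ((2 * N + 1 : ℕ) : ℂ) := by push_cast; ring
        rw [this, Complex.norm_natCast]; push_cast; ring
      rw [h1, mul_one_div]
      apply div_le_div_of_nonneg_left (norm_nonneg a) (by positivity)
      push_cast
      linarith [Nat.cast_nonneg (α := ℝ) N]
    have := hzero.add_const 1
    simpa using this
  have hbinv : Tendsto (fun N => (b N)⁻¹) atTop (𝓝 1) := by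
    have := hb.inv₀ one_ne_zero
    simpa using this
  rw [tendsto_iff_dist_tendsto_zero]
  have hbd := tendsto_iff_dist_tendsto_zero.mp hb
  have hbid := tendsto_iff_dist_tendsto_zero.mp hbinv
  apply squeeze_zero (fun N => dist_nonneg)
    (g := fun N => dist (b N) 1 + dist (b N)⁻¹ 1)
  · intro N
    rcases eps_eq_one_or (2 * N + 1) with h | h
    · rw [h, zpow_one]
      have : (0:ℝ) ≤ dist (b N)⁻¹ 1 := dist_nonneg
      linarith
    · rw [h, zpow_neg_one]
      have : (0:ℝ) ≤ dist (b N) 1 := dist_nonneg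
      linarith
  · have := hbd.add hbid
    simpa using this
end

theorem prod_identity_iii (a : ℂ) (ha : ∀ k : ℕ, a ≠ -((k : ℂ) + 1)) :
    Tendsto (fun N => ∏ n ∈ Finset.range N,
        (((2 * ((n : ℂ) + 1) + 2 * a) * (2 * ((n : ℂ) + 1) + a + 1)) /
          ((2 * ((n : ℂ) + 1) + a) * (2 * ((n : ℂ) + 1) + 1)))
          ^ ((-1 : ℤ) ^ tm (n + 1)))
      atTop (𝓝 (1 / (a + 1))) := by
  obtain ⟨L, hLne, hGG⟩ := GG_tendsto ha
  have h1a : (1 : ℂ) + a ≠ 0 := by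
    have := h_na ha 0; intro h; exact this (by linear_combination h)
  have hGGne : ∀ N, GG a N ≠ 0 := by
    intro N
    apply Finset.prod_ne_zero_iff.mpr
    intro m _
    exact zpow_ne_zero _ (gg_succ_ne ha m)
  -- odd subsequence of ff
  have hffodd : Tendsto (fun N => ff a (2 * N + 1)) atTop (𝓝 (L / (1 + a))) := by
    have heq : ∀ N, ff a (2 * N + 1) = GG a N / (1 + a) := by
      intro N
      rw [eq_div_iff h1a]
      exact ff_odd_split ha N
    rw [funext heq]
    exact hGG.div_const _
  -- even subsequence
  have htail := tail_tendsto (a := a)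
  have hffeven : Tendsto (fun N => ff a (2 * N)) atTop (𝓝 (L / (1 + a))) := by
    have hne : ∀ N : ℕ, ((((2 * N : ℕ) : ℂ) + 1 + a) / (((2 * N : ℕ) : ℂ) + 1))
        ^ eps (2 * N + 1) ≠ 0 := by
      intro N
      apply zpow_ne_zero
      apply div_ne_zero (h_na ha (2 * N)) (cast_k1 (2 * N))
    have heq : ∀ N, ff a (2 * N) = ff a (2 * N + 1) /
        ((((2 * N : ℕ) : ℂ) + 1 + a) / (((2 * N : ℕ) : ℂ) + 1)) ^ eps (2 * N + 1) := by
      intro N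
      have hstep : ff a (2 * N + 1) = ff a (2 * N) *
          ((((2 * N : ℕ) : ℂ) + 1 + a) / (((2 * N : ℕ) : ℂ) + 1)) ^ eps (2 * N + 1) :=
        Finset.prod_range_succ _ _
      rw [hstep, mul_div_cancel_right₀ _ (hne N)]
    rw [funext heq]
    have := hffodd.div htail one_ne_zero
    rw [div_one] at this
    exact this
  have hff : Tendsto (ff a) atTop (𝓝 (L / (1 + a))) := tendsto_of_even_odd hffeven hffodd
  have key : ∀ N, (∏ n ∈ Finset.range N,
        (((2 * ((n : ℂ) + 1) + 2 * a) * (2 * ((n : ℂ) + 1) + a + 1)) /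
          ((2 * ((n : ℂ) + 1) + a) * (2 * ((n : ℂ) + 1) + 1)))
          ^ ((-1 : ℤ) ^ tm (n + 1))) = ff a N / GG a N := by
    intro N
    rw [eq_div_iff (hGGne N)]
    exact prod_mul_GG ha N
  rw [funext key]
  have hfinal := hff.div hGG hLne
  have heq2 : L / (1 + a) / L = 1 / (a + 1) := by
    rw [div_right_comm, div_self hLne, add_comm (1:ℂ) a]
  rw [heq2] at hfinal
  exact hfinal
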